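/- Let l12, l13, l23 be positive reals satisfying the strict triangle inequalities, and for w ∈ ℝ³ let l̃ij = exp(wi+wj)·lij; on the open set U ⊆ ℝ³ where l̃ satisfies the strict triangle inequalities let θi(w) ∈ (0,π) be the inner angle at vertex i defined by the law of cosines. Then at every w ∈ U, ∂θ1/∂w1 = −(cot θ2 + cot θ3), and analogously ∂θi/∂wi = −(cot θj + cot θk) for each permutation (i,j,k) of (1,2,3). -/

import Mathlib

/-- Vertex-scaled edge length: `exp (w i + w j) * l i j`. -/
noncomputable def scaledLen (l : Fin 3 → Fin 3 → ℝ) (w : Fin 3 → ℝ) (i j : Fin 3) : ℝ :=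
  Real.exp (w i + w j) * l i j

/-- The inner angle at vertex `i` of the vertex-scaled triangle, by the law of cosines. -/
noncomputable def scaledAngle (l : Fin 3 → Fin 3 → ℝ) (i : Fin 3) (w : Fin 3 → ℝ) : ℝ :=
  Real.arccos ((scaledLen l w i (i + 1) ^ 2 + scaledLen l w i (i + 2) ^ 2
      - scaledLen l w (i + 1) (i + 2) ^ 2) /
    (2 * scaledLen l w i (i + 1) * scaledLen l w i (i + 2)))

namespace AngleAux

lemma scaledLen_symm (l : Fin 3 → Fin 3 → ℝ) (hsymm : ∀ i j, l i j = l j i)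
    (w : Fin 3 → ℝ) (p q : Fin 3) : scaledLen l w p q = scaledLen l w q p := by
  simp [scaledLen, hsymm p q, add_comm]

lemma scaledLen_pos (l : Fin 3 → Fin 3 → ℝ) (hpos : ∀ i j, i ≠ j → 0 < l i j)
    (w : Fin 3 → ℝ) {p q : Fin 3} (h : p ≠ q) : 0 < scaledLen l w p q :=
  mul_pos (Real.exp_pos _) (hpos _ _ h)

lemma finfacts : ∀ i : Fin 3, i + 1 ≠ i ∧ i + 2 ≠ i ∧ i + 1 ≠ i + 2 ∧
    i+1+1 = i+2 ∧ i+1+2 = i ∧ i+2+1 = i ∧ i+2+2 = i+1 := by decide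

set_option maxHeartbeats 1000000 in
lemma core (l : Fin 3 → Fin 3 → ℝ)
    (hsymm : ∀ i j, l i j = l j i)
    (hpos : ∀ i j, i ≠ j → 0 < l i j)
    (w : Fin 3 → ℝ)
    (hw : ∀ i : Fin 3,
      scaledLen l w (i + 1) (i + 2) < scaledLen l w i (i + 1) + scaledLen l w i (i + 2))
    (i : Fin 3) :
    DifferentiableAt ℝ (scaledAngle l i) w ∧
    fderiv ℝ (scaledAngle l i) w (Pi.single i 1)
      = -(Real.cot (scaledAngle l (i+1) w) + Real.cot (scaledAngle l (i+2) w)) := by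
  obtain ⟨h1, h2, h12, e11, e12, e21, e22⟩ := finfacts i
  set a := scaledLen l w i (i+1) with ha
  set b := scaledLen l w i (i+2) with hb
  set c := scaledLen l w (i+1) (i+2) with hc
  have hap : 0 < a := scaledLen_pos l hpos w (Ne.symm h1)
  have hbp : 0 < b := scaledLen_pos l hpos w (Ne.symm h2)
  have hcp : 0 < c := scaledLen_pos l hpos w h12
  have hcab : c < a + b := hw i
  have hbca : b < c + a := by
    have := hw (i+1)
    rw [e11, e12, scaledLen_symm l hsymm w (i+2) i, scaledLen_symm l hsymm w (i+1) i] at this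
    linarith
  have habc : a < b + c := by
    have := hw (i+2)
    rw [e21, e22, scaledLen_symm l hsymm w (i+2) i, scaledLen_symm l hsymm w (i+2) (i+1)] at this
    linarith
  set x := (a^2 + b^2 - c^2) / (2*a*b) with hxdef
  set y := (c^2 + a^2 - b^2) / (2*c*a) with hydef
  set z := (b^2 + c^2 - a^2) / (2*b*c) with hzdef
  have hx2 : x < 1 := by
    rw [hxdef, div_lt_one (by positivity)]
    nlinarith [mul_pos (show (0:ℝ) < c-a+b by linarith) (show (0:ℝ) < c+a-b by linarith)]
  have hx1 : (-1:ℝ) < x := by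
    rw [hxdef, lt_div_iff₀ (by positivity)]
    nlinarith [mul_pos (show (0:ℝ) < a+b-c by linarith) (show (0:ℝ) < a+b+c by linarith)]
  have hy2 : y < 1 := by
    rw [hydef, div_lt_one (by positivity)]
    nlinarith [mul_pos (show (0:ℝ) < b-c+a by linarith) (show (0:ℝ) < b+c-a by linarith)]
  have hy1 : (-1:ℝ) < y := by
    rw [hydef, lt_div_iff₀ (by positivity)]
    nlinarith [mul_pos (show (0:ℝ) < c+a-b by linarith) (show (0:ℝ) < c+a+b by linarith)]
  have hz2 : z < 1 := by
    rw [hzdef, div_lt_one (by positivity)]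
    nlinarith [mul_pos (show (0:ℝ) < a-b+c by linarith) (show (0:ℝ) < a+b-c by linarith)]
  have hz1 : (-1:ℝ) < z := by
    rw [hzdef, lt_div_iff₀ (by positivity)]
    nlinarith [mul_pos (show (0:ℝ) < b+c-a by linarith) (show (0:ℝ) < b+c+a by linarith)]
  set P := 4*a^2*b^2 - (a^2 + b^2 - c^2)^2 with hPdef
  have hP : 0 < P := by
    have : P = (a+b+c)*(a+b-c)*(c+a-b)*(c+b-a) := by rw [hPdef]; ring
    rw [this]
    have h1 : 0 < a+b+c := by linarith
    have h2 : 0 < a+b-c := by linarith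
    have h3 : 0 < c+a-b := by linarith
    have h4 : 0 < c+b-a := by linarith
    positivity
  have hsP : 0 < Real.sqrt P := Real.sqrt_pos.2 hP
  have hsx : Real.sqrt (1 - x^2) = Real.sqrt P / (2*a*b) := by
    have h : 1 - x^2 = P / (2*a*b)^2 := by
      rw [hxdef, hPdef]; field_simp; ring
    rw [h, Real.sqrt_div hP.le, Real.sqrt_sq (by positivity)]
  have hsy : Real.sqrt (1 - y^2) = Real.sqrt P / (2*c*a) := by
    have h : 1 - y^2 = P / (2*c*a)^2 := by
      rw [hydef, hPdef]; field_simp; ring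
    rw [h, Real.sqrt_div hP.le, Real.sqrt_sq (by positivity)]
  have hsz : Real.sqrt (1 - z^2) = Real.sqrt P / (2*b*c) := by
    have h : 1 - z^2 = P / (2*b*c)^2 := by
      rw [hzdef, hPdef]; field_simp; ring
    rw [h, Real.sqrt_div hP.le, Real.sqrt_sq (by positivity)]
  -- angle identifications
  have hθi : scaledAngle l i w = Real.arccos x := rfl
  have hθj : scaledAngle l (i+1) w = Real.arccos y := by
    rw [scaledAngle, e11, e12, scaledLen_symm l hsymm w (i+1) i,
      scaledLen_symm l hsymm w (i+2) i]
  have hθk : scaledAngle l (i+2) w = Real.arccos z := by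
    rw [scaledAngle, e21, e22, scaledLen_symm l hsymm w (i+2) i,
      scaledLen_symm l hsymm w (i+2) (i+1)]
  -- differentiability
  have hsl : ∀ p q : Fin 3, DifferentiableAt ℝ (fun v : Fin 3 → ℝ => scaledLen l v p q) w := by
    intro p q
    have : DifferentiableAt ℝ (fun v : Fin 3 → ℝ => v p + v q) w :=
      ((ContinuousLinearMap.proj p : (Fin 3 → ℝ) →L[ℝ] ℝ).differentiableAt).add
        ((ContinuousLinearMap.proj q : (Fin 3 → ℝ) →L[ℝ] ℝ).differentiableAt)
    simpa [scaledLen] using this.exp.mul_const (l p q)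
  have hFd : DifferentiableAt ℝ (fun v : Fin 3 → ℝ =>
      (scaledLen l v i (i+1)^2 + scaledLen l v i (i+2)^2 - scaledLen l v (i+1) (i+2)^2) /
        (2 * scaledLen l v i (i+1) * scaledLen l v i (i+2))) w := by
    have hnum : DifferentiableAt ℝ (fun v : Fin 3 → ℝ =>
        scaledLen l v i (i+1)^2 + scaledLen l v i (i+2)^2 - scaledLen l v (i+1) (i+2)^2) w :=
      (((hsl i (i+1)).pow 2).add ((hsl i (i+2)).pow 2)).sub ((hsl (i+1) (i+2)).pow 2)
    have hden : DifferentiableAt ℝ (fun v : Fin 3 → ℝ =>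
        2 * scaledLen l v i (i+1) * scaledLen l v i (i+2)) w :=
      ((differentiableAt_const 2).mul (hsl i (i+1))).mul (hsl i (i+2))
    have hdne : (2:ℝ) * scaledLen l w i (i+1) * scaledLen l w i (i+2) ≠ 0 := by
      rw [← ha, ← hb]; positivity
    simp only [div_eq_mul_inv]
    exact hnum.mul (hden.inv hdne)
  have harcd : DifferentiableAt ℝ Real.arccos x :=
    (Real.hasDerivAt_arccos hx1.ne' hx2.ne).differentiableAt
  have hdiff : DifferentiableAt ℝ (scaledAngle l i) w := by
    exact harcd.comp w hFd
  refine ⟨hdiff, ?_⟩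
  -- the line restriction
  have hline : HasDerivAt (fun t : ℝ => w + t • (Pi.single i 1 : Fin 3 → ℝ)) ((Pi.single i 1 : Fin 3 → ℝ)) 0 := by
    simpa using ((hasDerivAt_id (0:ℝ)).smul_const ((Pi.single i 1 : Fin 3 → ℝ))).const_add w
  have hcomp : HasDerivAt (fun t : ℝ => scaledAngle l i (w + t • (Pi.single i 1 : Fin 3 → ℝ)))
      (fderiv ℝ (scaledAngle l i) w (Pi.single i 1)) 0 := by
    have hf : HasFDerivAt (scaledAngle l i) (fderiv ℝ (scaledAngle l i) w)
        ((fun t : ℝ => w + t • (Pi.single i 1 : Fin 3 → ℝ)) 0) := by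
      simpa using hdiff.hasFDerivAt
    simpa [Function.comp_def] using hf.comp_hasDerivAt 0 hline
  -- explicit form of the restricted function
  have hfun : (fun t : ℝ => scaledAngle l i (w + t • (Pi.single i 1 : Fin 3 → ℝ)))
      = fun t : ℝ => Real.arccos (((Real.exp t)^2 * (a^2+b^2) - c^2) /
          ((Real.exp t)^2 * (2*a*b))) := by
    funext t
    rw [scaledAngle]
    congr 1
    have v1 : (w + t • (Pi.single i 1 : Fin 3 → ℝ)) i = w i + t := by simp
    have v2 : (w + t • (Pi.single i 1 : Fin 3 → ℝ)) (i+1) = w (i+1) := by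
      simp [Pi.single_eq_of_ne h1]
    have v3 : (w + t • (Pi.single i 1 : Fin 3 → ℝ)) (i+2) = w (i+2) := by
      simp [Pi.single_eq_of_ne h2]
    rw [scaledLen, scaledLen, scaledLen, v1, v2, v3]
    rw [ha, hb, hc, scaledLen, scaledLen, scaledLen]
    simp only [Real.exp_add]
    ring
  have hu : HasDerivAt (fun t : ℝ => (Real.exp t)^2 * (a^2+b^2) - c^2)
      (2 * (a^2+b^2)) 0 := by
    have := (((Real.hasDerivAt_exp 0).pow 2).mul_const (a^2+b^2)).sub_const (c^2)
    simpa using this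
  have hv : HasDerivAt (fun t : ℝ => (Real.exp t)^2 * (2*a*b)) (2 * (2*a*b)) 0 := by
    have := ((Real.hasDerivAt_exp 0).pow 2).mul_const (2*a*b)
    simpa using this
  have hvne : (Real.exp (0:ℝ))^2 * (2*a*b) ≠ 0 := by positivity
  have hdiv := hu.div hv hvne
  have hval : ((fun t : ℝ => (Real.exp t)^2 * (a^2+b^2) - c^2) 0) /
      ((fun t : ℝ => (Real.exp t)^2 * (2*a*b)) 0) = x := by
    simp [hxdef]
  have harc : HasDerivAt (fun t : ℝ => Real.arccos (((Real.exp t)^2 * (a^2+b^2) - c^2) /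
      ((Real.exp t)^2 * (2*a*b))))
      (-(1 / Real.sqrt (1 - x^2)) *
        ((2*(a^2+b^2) * ((Real.exp 0)^2 * (2*a*b)) -
          ((Real.exp 0)^2 * (a^2+b^2) - c^2) * (2*(2*a*b))) / ((Real.exp 0)^2 * (2*a*b))^2)) 0 := by
    have h := (Real.hasDerivAt_arccos (x := x) hx1.ne' hx2.ne)
    have h2' : HasDerivAt Real.arccos (-(1 / Real.sqrt (1 - x^2)))
        (((Real.exp (0:ℝ))^2 * (a^2+b^2) - c^2) / ((Real.exp 0)^2 * (2*a*b))) := by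
      rw [show ((Real.exp (0:ℝ))^2 * (a^2+b^2) - c^2) / ((Real.exp 0)^2 * (2*a*b)) = x from hval]
      exact h
    simpa [Function.comp_def, Pi.div_apply] using h2'.comp 0 hdiv
  have hD : fderiv ℝ (scaledAngle l i) w (Pi.single i 1)
      = -(1 / Real.sqrt (1 - x^2)) *
        ((2*(a^2+b^2) * ((Real.exp 0)^2 * (2*a*b)) -
          ((Real.exp 0)^2 * (a^2+b^2) - c^2) * (2*(2*a*b))) / ((Real.exp 0)^2 * (2*a*b))^2) := by
    apply HasDerivAt.unique hcomp
    rw [hfun]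
    exact harc
  rw [hD, hθj, hθk, Real.cot_eq_cos_div_sin, Real.cot_eq_cos_div_sin,
    Real.cos_arccos hy1.le hy2.le, Real.cos_arccos hz1.le hz2.le,
    Real.sin_arccos, Real.sin_arccos, hsx, hsy, hsz, hydef, hzdef]
  rw [Real.exp_zero]
  have h2ab : (2*a*b) ≠ 0 := by positivity
  field_simp
  ring
end AngleAux

theorem angle_partial_deriv_self_eq_neg_sum_cot
    (l : Fin 3 → Fin 3 → ℝ)
    (hsymm : ∀ i j, l i j = l j i)
    (hpos : ∀ i j, i ≠ j → 0 < l i j)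
    (htri : ∀ i : Fin 3, l (i + 1) (i + 2) < l i (i + 1) + l i (i + 2))
    (w : Fin 3 → ℝ)
    (hw : ∀ i : Fin 3,
      scaledLen l w (i + 1) (i + 2) < scaledLen l w i (i + 1) + scaledLen l w i (i + 2))
    (i j k : Fin 3) (hij : i ≠ j) (hjk : j ≠ k) (hik : i ≠ k) :
    DifferentiableAt ℝ (scaledAngle l i) w ∧
    fderiv ℝ (scaledAngle l i) w (Pi.single i 1)
      = -(Real.cot (scaledAngle l j w) + Real.cot (scaledAngle l k w)) := by
  have hcases : (j = i+1 ∧ k = i+2) ∨ (j = i+2 ∧ k = i+1) := by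
    revert hij hjk hik; revert i j k; decide
  obtain ⟨hc, hd⟩ := AngleAux.core l hsymm hpos w hw i
  rcases hcases with ⟨hj, hk⟩ | ⟨hj, hk⟩
  · subst hj; subst hk; exact ⟨hc, hd⟩
  · subst hj; subst hk
    refine ⟨hc, ?_⟩
    rw [hd, add_comm]
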